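/- For the truncated logarithm function tlog, defined by tlog(x) = log(x) if |log(x)| < 1 and tlog(x) = sign(log(x)) otherwise, there exists a constant C > 0 such that for all x ≥ 0: (1/C)·(1 - √x)² ≤ x·tlog(x) + x·(tlog(x))² + 1 - x ≤ C·(1 - √x)². -/
import Mathlib
set_option maxHeartbeats 1000000

open Real

noncomputable def tlog (x : ℝ) : ℝ :=
  if |Real.log x| < 1 then Real.log x else if 1 ≤ Real.log x then 1 else -1

theorem stmt0 :
    ∃ C : ℝ, 0 < C ∧ ∀ x : ℝ, 0 ≤ x →
      (1 / C) * (1 - Real.sqrt x) ^ 2 ≤ x * tlog x + x * (tlog x) ^ 2 + 1 - x ∧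
      x * tlog x + x * (tlog x) ^ 2 + 1 - x ≤ C * (1 - Real.sqrt x) ^ 2 := by
  refine ⟨1000, by norm_num, fun x hx => ?_⟩
  rcases eq_or_lt_of_le hx with h0 | hxpos
  · simp [← h0, tlog]
    norm_num
  set t := Real.sqrt x with htdef
  have ht : 0 < t := Real.sqrt_pos.mpr hxpos
  have ht2 : t ^ 2 = x := Real.sq_sqrt hx
  have hexp_lt : Real.exp 1 < 2.7182818286 := Real.exp_one_lt_d9
  have hexp_gt : (2.7182818283 : ℝ) < Real.exp 1 := Real.exp_one_gt_d9
  unfold tlog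
  split_ifs with h1 h2
  · -- middle region: |log x| < 1
    set L := Real.log x with hLdef
    obtain ⟨hLlo, hLhi⟩ := abs_lt.mp h1
    have hxlt : x < 3 := by
      have : x = Real.exp L := (Real.exp_log hxpos).symm
      have h2 : Real.exp L < Real.exp 1 := Real.exp_lt_exp.mpr hLhi
      nlinarith
    have hxgt : 1/3 < x := by
      have hx' : x = Real.exp L := (Real.exp_log hxpos).symm
      have h2 : Real.exp (-1) < Real.exp L := Real.exp_lt_exp.mpr hLlo
      have h3 : Real.exp (-1) = (Real.exp 1)⁻¹ := by rw [Real.exp_neg]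
      have h4 : (1:ℝ)/3 < (Real.exp 1)⁻¹ := by
        have hinv : (0:ℝ) < (Real.exp 1)⁻¹ := by positivity
        have hm : Real.exp 1 * (Real.exp 1)⁻¹ = 1 := mul_inv_cancel₀ (Real.exp_pos 1).ne'
        nlinarith
      linarith [h4, h3 ▸ h2, hx'.ge]
    have hA : L ≤ x - 1 := Real.log_le_sub_one_of_pos hxpos
    have hB : x - 1 ≤ x * L := by
      have h5 : Real.log x⁻¹ ≤ x⁻¹ - 1 := Real.log_le_sub_one_of_pos (by positivity)
      rw [Real.log_inv] at h5
      have : 1 - x⁻¹ ≤ L := by linarith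
      have hxinv : x * x⁻¹ = 1 := mul_inv_cancel₀ hxpos.ne'
      nlinarith
    have htle2 : t ≤ 2 := by nlinarith
    have h9 : (x - 1)^2 ≤ 9 * (1 - t)^2 := by
      nlinarith [mul_nonneg (sq_nonneg (t-1)) (show (0:ℝ) ≤ 9 - (t+1)^2 by nlinarith)]
    have hL2 : L^2 ≤ 9 * (x - 1)^2 := by
      rcases le_or_gt 1 x with hx1 | hx1
      · have hL0 : 0 ≤ L := Real.log_nonneg hx1
        nlinarith
      · have hL0 : L ≤ 0 := Real.log_nonpos hx (by nlinarith)
        have hneg : -L ≤ 3 * (1 - x) := by nlinarith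
        nlinarith
    constructor
    · -- lower bound
      have hlogsqrt : Real.log t = L / 2 := Real.log_sqrt hx
      have htL : 2 * t - 2 ≤ t * L := by
        have h5 : Real.log t⁻¹ ≤ t⁻¹ - 1 := Real.log_le_sub_one_of_pos (by positivity)
        rw [Real.log_inv, hlogsqrt] at h5
        have htinv : t * t⁻¹ = 1 := mul_inv_cancel₀ ht.ne'
        nlinarith
      have hxLlow : 2 * t^2 - 2 * t ≤ x * L := by
        have := mul_nonneg ht.le (show (0:ℝ) ≤ t * L - (2*t - 2) by linarith)
        nlinarith
      nlinarith [mul_nonneg hxpos.le (sq_nonneg L), sq_nonneg (t - 1)]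
    · -- upper bound
      have hmul1 : x * L ≤ x * (x - 1) := mul_le_mul_of_nonneg_left hA hxpos.le
      have hmul2 : x * L^2 ≤ 3 * L^2 := by nlinarith [sq_nonneg L]
      nlinarith [sq_nonneg (1 - t)]
  · -- log x ≥ 1
    have hxe : Real.exp 1 ≤ x := by
      have := Real.exp_le_exp.mpr h2
      rwa [Real.exp_log hxpos] at this
    have hx27 : (2.7:ℝ) ≤ x := by linarith
    have ht16 : (1.6:ℝ) ≤ t := by nlinarith
    constructor
    · nlinarith
    · nlinarith [sq_nonneg (t - 1.6)]
  · -- log x ≤ -1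
    have hlog : Real.log x ≤ -1 := by
      rcases le_or_gt 0 (Real.log x) with h | h
      · rw [abs_of_nonneg h] at h1
        exfalso; exact h2 (not_lt.mp h1)
      · have h5 := not_lt.mp h1
        rw [abs_of_neg h] at h5
        linarith
    have hxe : x ≤ Real.exp (-1) := by
      have := Real.exp_le_exp.mpr hlog
      rwa [Real.exp_log hxpos] at this
    have hxle : x ≤ 0.38 := by
      have h3 : Real.exp (-1) = (Real.exp 1)⁻¹ := by rw [Real.exp_neg]
      have h4 : (Real.exp 1)⁻¹ ≤ 0.38 := by
        have hinv : (0:ℝ) < (Real.exp 1)⁻¹ := by positivity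
        have hm : Real.exp 1 * (Real.exp 1)⁻¹ = 1 := mul_inv_cancel₀ (Real.exp_pos 1).ne'
        nlinarith
      linarith [h3 ▸ hxe]
    have ht062 : t ≤ 0.62 := by nlinarith
    constructor
    · nlinarith
    · nlinarith
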